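/- arXiv:2410.09304 — 2 statements merged into one kernel-verified Lean document; each statement's English description precedes it below -/
import Mathlib

section
/- For a tree T_m of order m ≥ 2 and any connected graph H_n of order n ≥ 2, rvc(T_m ⋄ H_n) = rvc(T_m). -/
open SimpleGraph

/-- A walk is a rainbow vertex path: it is a path and its internal vertices
receive pairwise distinct colors. -/
def IsRainbowPath {V : Type*} (G : SimpleGraph V) {k : ℕ} (c : V → Fin k)
    {u v : V} (p : G.Walk u v) : Prop :=
  p.IsPath ∧ (p.support.tail.dropLast.map c).Nodup

/-- A rainbow vertex coloring: every two vertices are joined by a rainbow vertex path. -/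
def IsRVColoring {V : Type*} (G : SimpleGraph V) {k : ℕ} (c : V → Fin k) : Prop :=
  ∀ u v : V, ∃ p : G.Walk u v, IsRainbowPath G c p

/-- The rainbow vertex connection number. -/
noncomputable def rvc {V : Type*} (G : SimpleGraph V) : ℕ :=
  sInf {k | ∃ c : V → Fin k, IsRVColoring G c}

/-- The rainbow code of a vertex: its vector of distances to the color classes. -/
noncomputable def rainbowCode {V : Type*} (G : SimpleGraph V) {k : ℕ}
    (c : V → Fin k) (v : V) : Fin k → ℕ :=
  fun i => sInf {d | ∃ w, c w = i ∧ G.dist v w = d}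

/-- A locating rainbow coloring: a rainbow vertex coloring whose rainbow codes
are pairwise distinct. -/
def IsLocatingRVColoring {V : Type*} (G : SimpleGraph V) {k : ℕ} (c : V → Fin k) : Prop :=
  IsRVColoring G c ∧ Function.Injective (rainbowCode G c)

/-- The locating rainbow connection number. -/
noncomputable def rvcl {V : Type*} (G : SimpleGraph V) : ℕ :=
  sInf {k | ∃ c : V → Fin k, IsLocatingRVColoring G c}

/-- The edge corona `G ⋄ H`: one copy of `G` together with one copy of `H`
for each edge of `G`, where both endpoints of the edge are joined to
every vertex of the corresponding copy of `H`. -/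
def edgeCorona {V W : Type*} (G : SimpleGraph V) (H : SimpleGraph W) :
    SimpleGraph (V ⊕ (G.edgeSet × W)) where
  Adj x y :=
    match x, y with
    | .inl u, .inl v => G.Adj u v
    | .inl u, .inr (e, _) => u ∈ (e : Sym2 V)
    | .inr (e, _), .inl u => u ∈ (e : Sym2 V)
    | .inr (e, w), .inr (e', w') => e = e' ∧ H.Adj w w'
  symm := ⟨by
    rintro (u | ⟨e, w⟩) (v | ⟨e', w'⟩) h
    · exact h.symm
    · exact h
    · exact h
    · exact ⟨h.1.symm, h.2.symm⟩⟩
  loopless := ⟨by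
    rintro (u | ⟨e, w⟩) h
    · exact G.irrefl h
    · exact H.irrefl h.2⟩

/-- A cut vertex: a vertex whose removal disconnects the graph. -/
def IsCutVertex {V : Type*} (G : SimpleGraph V) (v : V) : Prop :=
  ¬ (G.induce {u | u ≠ v}).Connected

section MyAux

open SimpleGraph List

variable {V : Type*}

lemma myTailDropLast (l : List V) : l.tail.dropLast = l.dropLast.tail := by
  cases l with
  | nil => rfl
  | cons a l =>
    cases l with
    | nil => rfl
    | cons b m => simp

lemma myDropLastReverse (l : List V) : l.reverse.dropLast = l.tail.reverse := by
  have h := List.tail_reverse (l := l.reverse)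
  rw [List.reverse_reverse] at h
  rw [h, List.reverse_reverse]

lemma myInternalReverse (l : List V) : l.reverse.tail.dropLast = l.tail.dropLast.reverse := by
  rw [List.tail_reverse, myDropLastReverse, ← myTailDropLast]

lemma myMapDropLast {β : Type*} (f : V → β) : ∀ l : List V, (l.map f).dropLast = l.dropLast.map f
  | [] => rfl
  | [_] => rfl
  | a :: b :: m => by
    simp only [List.map_cons, List.dropLast_cons₂]
    rw [← List.map_cons (f := f) (a := b) (l := m), myMapDropLast f (b :: m)]

lemma myInternalMap {β : Type*} (f : V → β) (l : List V) :
    (l.map f).tail.dropLast = (l.tail.dropLast).map f := by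
  cases l with
  | nil => rfl
  | cons a l =>
    simp only [List.map_cons, List.tail_cons]
    exact myMapDropLast f l

variable {G : SimpleGraph V}

lemma myMemDropLast : ∀ {u v x : V} (p : G.Walk u v), x ∈ p.support → x ≠ v →
    x ∈ p.support.dropLast
  | u, _, x, .nil, hx, hxv => by simp at hx; exact absurd hx hxv
  | u, v, x, .cons h q, hx, hxv => by
    rw [Walk.support_cons] at hx
    rw [Walk.support_cons, List.dropLast_cons_of_ne_nil q.support_ne_nil]
    rcases List.mem_cons.1 hx with rfl | hx
    · exact List.mem_cons_self
    · exact List.mem_cons_of_mem _ (myMemDropLast q hx hxv)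

lemma myMemInternal {u v x : V} (p : G.Walk u v) (hx : x ∈ p.support) (hxu : x ≠ u)
    (hxv : x ≠ v) : x ∈ p.support.tail.dropLast := by
  cases p with
  | nil => simp at hx; exact absurd hx hxu
  | cons h q =>
    rw [Walk.support_cons] at hx
    rw [Walk.support_cons, List.tail_cons]
    rcases List.mem_cons.1 hx with rfl | hx
    · exact absurd rfl hxu
    · exact myMemDropLast q hx hxv

lemma myEndNotMemDropLast : ∀ {u v : V} (p : G.Walk u v), p.support.Nodup →
    v ∉ p.support.dropLast
  | _, _, .nil, _ => by simp
  | _, _, .cons h q, hnd => by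
    rw [Walk.support_cons] at hnd
    rw [Walk.support_cons, List.dropLast_cons_of_ne_nil q.support_ne_nil]
    intro hm
    rcases List.mem_cons.1 hm with rfl | hm
    · exact (List.nodup_cons.1 hnd).1 q.end_mem_support
    · exact myEndNotMemDropLast q (List.nodup_cons.1 hnd).2 hm

lemma myEndNotMemInternal {u v : V} (p : G.Walk u v) (h : p.support.Nodup) :
    v ∉ p.support.tail.dropLast := by
  cases p with
  | nil => simp
  | cons h' q =>
    rw [Walk.support_cons] at h
    rw [Walk.support_cons, List.tail_cons]
    exact myEndNotMemDropLast q (List.nodup_cons.1 h).2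

lemma myStartNotMemInternal {u v : V} (p : G.Walk u v) (h : p.support.Nodup) :
    u ∉ p.support.tail.dropLast := by
  intro hm
  have h1 : u ∈ p.support.tail := (List.dropLast_sublist _).subset hm
  rw [p.support_eq_cons] at h
  exact (List.nodup_cons.1 h).1 h1

lemma myRainbowReverse {k : ℕ} {c : V → Fin k} {u v : V} {p : G.Walk u v}
    (h : IsRainbowPath G c p) : IsRainbowPath G c p.reverse := by
  refine ⟨h.1.reverse, ?_⟩
  rw [Walk.support_reverse, myInternalReverse, List.map_reverse]
  exact List.nodup_reverse.2 h.2

end MyAux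
section MyCorona

open SimpleGraph List

variable {V W : Type*} {T : SimpleGraph V} {H : SimpleGraph W}

lemma myAdjInlInl {a b : V} (h : T.Adj a b) :
    (edgeCorona T H).Adj (Sum.inl a) (Sum.inl b) := h

lemma myAdjInlInr {a : V} {e : T.edgeSet} {w : W} (h : a ∈ (e : Sym2 V)) :
    (edgeCorona T H).Adj (Sum.inl a) (Sum.inr (e, w)) := h

lemma myAdjInrInl {a : V} {e : T.edgeSet} {w : W} (h : a ∈ (e : Sym2 V)) :
    (edgeCorona T H).Adj (Sum.inr (e, w)) (Sum.inl a) := h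

abbrev myInlHom (T : SimpleGraph V) (H : SimpleGraph W) : T →g edgeCorona T H :=
  ⟨Sum.inl, fun h => h⟩

lemma myInlHomInj : Function.Injective (myInlHom T H) := fun _ _ h => Sum.inl_injective h

lemma myEdgeRep (e : T.edgeSet) : ∃ x y : V, T.Adj x y ∧ (e : Sym2 V) = s(x, y) := by
  obtain ⟨e', he⟩ := e
  induction e' using Sym2.ind with
  | _ x y => exact ⟨x, y, T.mem_edgeSet.1 he, rfl⟩

lemma myAdjOfMem {e : Sym2 V} (he : e ∈ T.edgeSet) {a b : V} (ha : a ∈ e) (hb : b ∈ e)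
    (hab : a ≠ b) : T.Adj a b := by
  induction e using Sym2.ind with
  | _ x y =>
    rw [SimpleGraph.mem_edgeSet] at he
    rw [Sym2.mem_iff] at ha hb
    rcases ha with rfl | rfl <;> rcases hb with rfl | rfl
    · exact absurd rfl hab
    · exact he
    · exact he.symm
    · exact absurd rfl hab

lemma myTreePathUnique (hT : T.IsTree) {u v : V} {p q : T.Walk u v} (hp : p.IsPath)
    (hq : q.IsPath) : p = q := by
  have h := (isAcyclic_iff_path_unique.1 hT.IsAcyclic) ⟨p, hp⟩ ⟨q, hq⟩
  exact congrArg Subtype.val h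

lemma myTreeRainbow (hT : T.IsTree) {k : ℕ} {c₀ : V → Fin k} (hc : IsRVColoring T c₀)
    {u v : V} (p : T.Walk u v) (hp : p.IsPath) :
    (p.support.tail.dropLast.map c₀).Nodup := by
  obtain ⟨q, hq1, hq2⟩ := hc u v
  rw [myTreePathUnique hT hp hq1]
  exact hq2

lemma myTreeE [DecidableEq V] (hT : T.IsTree) {x y : V} (hxy : T.Adj x y) (v : V) :
    ∃ z a, ∃ _hza : T.Adj z a, s(z, a) = s(x, y) ∧
      ∃ r : T.Walk a v, r.IsPath ∧ z ∉ r.support := by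
  obtain ⟨r0⟩ := hT.isConnected.preconnected y v
  have hr1p : r0.bypass.IsPath := r0.bypass_isPath
  set r1 := r0.bypass with hr1
  by_cases hx : x ∈ r1.support
  · refine ⟨y, x, hxy.symm, Sym2.eq_swap, r1.dropUntil x hx, hr1p.dropUntil hx, ?_⟩
    intro hy
    have hnd : r1.support.Nodup := hr1p.support_nodup
    rw [← r1.take_spec hx, Walk.support_append] at hnd
    have hdisj := List.disjoint_of_nodup_append hnd
    have hy1 : y ∈ (r1.takeUntil x hx).support := Walk.start_mem_support _
    have hy2 : y ∈ (r1.dropUntil x hx).support.tail := by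
      rw [(r1.dropUntil x hx).support_eq_cons] at hy
      rcases List.mem_cons.1 hy with h' | h'
      · exact absurd h'.symm hxy.ne
      · exact h'
    exact hdisj hy1 hy2
  · exact ⟨x, y, hxy, rfl, r1, hr1p, hx⟩

def myProjGoal (T : SimpleGraph V) (H : SimpleGraph W) (w b : V) :
    V ⊕ (T.edgeSet × W) → Prop
  | .inl a => ∃ q : T.Walk a b, w ∉ q.support
  | .inr (e, _) => ∃ z, z ∈ (e : Sym2 V) ∧ ∃ q : T.Walk z b, w ∉ q.support

lemma myProject {w b : V} :
    ∀ {s t : V ⊕ (T.edgeSet × W)} (p : (edgeCorona T H).Walk s t), t = Sum.inl b →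
      (Sum.inl w : V ⊕ (T.edgeSet × W)) ∉ p.support → myProjGoal T H w b s := by
  intro s t p
  induction p with
  | nil =>
    rintro rfl hw
    simp only [Walk.support_nil, List.mem_singleton] at hw
    exact ⟨Walk.nil, by simpa using fun h => hw (congrArg Sum.inl h)⟩
  | @cons s y t h q ih =>
    rintro rfl hw
    rw [Walk.support_cons, List.mem_cons] at hw
    push_neg at hw
    obtain ⟨hws, hwq⟩ := hw
    have IH := ih rfl hwq
    match s, y, h with
    | Sum.inl a, Sum.inl z, h =>
      obtain ⟨q', hq'⟩ := IH
      refine ⟨Walk.cons h q', ?_⟩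
      show w ∉ a :: q'.support
      intro hm
      rcases List.mem_cons.1 hm with rfl | hm
      · exact hws rfl
      · exact hq' hm
    | Sum.inl a, Sum.inr (e', x'), h =>
      obtain ⟨z, hz, q', hq'⟩ := IH
      by_cases hza : z = a
      · subst hza; exact ⟨q', hq'⟩
      · refine ⟨Walk.cons (myAdjOfMem e'.2 h hz (Ne.symm hza)) q', ?_⟩
        rw [Walk.support_cons]
        intro hm
        rcases List.mem_cons.1 hm with rfl | hm
        · exact hws rfl
        · exact hq' hm
    | Sum.inr (e, x), Sum.inl z, h =>
      obtain ⟨q', hq'⟩ := IH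
      exact ⟨z, h, q', hq'⟩
    | Sum.inr (e, x), Sum.inr (e', x'), h =>
      obtain ⟨z, hz, q', hq'⟩ := IH
      exact ⟨z, h.1 ▸ hz, q', hq'⟩

lemma myCoronaConnected (hT : T.Connected) : (edgeCorona T H).Connected := by
  have hV : Nonempty V := hT.nonempty
  have reachInl : ∀ a b : V, (edgeCorona T H).Reachable (Sum.inl a) (Sum.inl b) := by
    intro a b
    obtain ⟨p⟩ := hT.preconnected a b
    exact ⟨p.map (myInlHom T H)⟩
  have reachInr : ∀ (e : T.edgeSet) (x : W),
      ∃ a : V, (edgeCorona T H).Reachable (Sum.inr (e, x)) (Sum.inl a) := by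
    intro e x
    obtain ⟨a, b, hab, he⟩ := myEdgeRep e
    exact ⟨a, (myAdjInrInl (by rw [he]; exact Sym2.mem_mk_left a b)).reachable⟩
  rw [connected_iff]
  refine ⟨?_, ⟨Sum.inl hV.some⟩⟩
  rintro (a | ⟨e, x⟩) (b | ⟨f, y⟩)
  · exact reachInl a b
  · obtain ⟨z, hz⟩ := reachInr f y
    exact ((reachInl a z).trans hz.symm)
  · obtain ⟨z, hz⟩ := reachInr e x
    exact (hz.trans (reachInl z b))
  · obtain ⟨z, hz⟩ := reachInr e x
    obtain ⟨z', hz'⟩ := reachInr f y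
    exact hz.trans ((reachInl z z').trans hz'.symm)

lemma myExistsColoring (G : SimpleGraph V) [Fintype V] (hG : G.Connected) :
    ∃ c : V → Fin (Fintype.card V), IsRVColoring G c := by
  classical
  refine ⟨fun v => (Fintype.equivFin V) v, fun u v => ?_⟩
  obtain ⟨p⟩ := hG.preconnected u v
  refine ⟨p.bypass, p.bypass_isPath, ?_⟩
  have h1 : p.bypass.support.tail.dropLast.Nodup :=
    ((List.dropLast_sublist _).trans (List.tail_sublist _)).nodup
      p.bypass_isPath.support_nodup
  exact h1.map (Fintype.equivFin V).injective

end MyCorona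
section MyMain

open SimpleGraph List

variable {V W : Type*} {T : SimpleGraph V} {H : SimpleGraph W}

@[simp] lemma myInlHom_apply (a : V) : myInlHom T H a = Sum.inl a := rfl

lemma myCoronaColoring [DecidableEq V] (hT : T.IsTree) {k : ℕ} (c₀ : V → Fin k)
    (hc₀ : IsRVColoring T c₀) (hV : Nonempty V) :
    ∃ c : V ⊕ (T.edgeSet × W) → Fin k, IsRVColoring (edgeCorona T H) c := by
  set c : V ⊕ (T.edgeSet × W) → Fin k := Sum.elim c₀ (fun _ => c₀ hV.some) with hcdef
  refine ⟨c, ?_⟩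
  have Hll : ∀ u v : V, ∃ p : (edgeCorona T H).Walk (Sum.inl u) (Sum.inl v),
      IsRainbowPath _ c p := by
    intro u v
    obtain ⟨q, hq, hqr⟩ := hc₀ u v
    refine ⟨q.map (myInlHom T H), Walk.map_isPath_of_injective myInlHomInj hq, ?_⟩
    rw [Walk.support_map, myInternalMap, List.map_map]
    exact hqr
  have Hrl : ∀ (e : T.edgeSet) (w' : W) (v : V),
      ∃ p : (edgeCorona T H).Walk (Sum.inr (e, w')) (Sum.inl v), IsRainbowPath _ c p := by
    intro e w' v
    by_cases hv : v ∈ (e : Sym2 V)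
    · exact ⟨Walk.cons (myAdjInrInl hv) Walk.nil, Walk.IsPath.mk' (by simp), by simp⟩
    · obtain ⟨x, y, hxy, hexy⟩ := myEdgeRep e
      obtain ⟨z, a, hza, hsza, r, hr, hzr⟩ := myTreeE hT hxy v
      have ha : a ∈ (e : Sym2 V) := by rw [hexy, ← hsza]; exact Sym2.mem_mk_right z a
      refine ⟨Walk.cons (myAdjInrInl ha) (r.map (myInlHom T H)), ?_, ?_⟩
      · rw [Walk.cons_isPath_iff]
        refine ⟨Walk.map_isPath_of_injective myInlHomInj hr, ?_⟩
        rw [Walk.support_map]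
        simp
      · rw [Walk.support_cons, List.tail_cons, Walk.support_map, myMapDropLast, List.map_map]
        have hP : (Walk.cons hza r).IsPath := (Walk.cons_isPath_iff _ _).2 ⟨hr, hzr⟩
        have h2 := myTreeRainbow hT hc₀ _ hP
        rw [Walk.support_cons, List.tail_cons] at h2
        exact h2
  have Hrr : ∀ (e e' : T.edgeSet) (w1 w2 : W),
      ∃ p : (edgeCorona T H).Walk (Sum.inr (e, w1)) (Sum.inr (e', w2)),
        IsRainbowPath _ c p := by
    intro e e' w1 w2
    by_cases hee : e = e'
    · subst hee
      by_cases hw : w1 = w2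
      · subst hw
        exact ⟨Walk.nil, Walk.IsPath.nil, by simp⟩
      · obtain ⟨x, y, hxy, hexy⟩ := myEdgeRep e
        have hx : x ∈ (e : Sym2 V) := by rw [hexy]; exact Sym2.mem_mk_left x y
        exact ⟨Walk.cons (myAdjInrInl hx) (Walk.cons (myAdjInlInr hx) Walk.nil),
          Walk.IsPath.mk' (by simp [hw]), by simp⟩
    · by_cases hshare : ∃ m, m ∈ (e : Sym2 V) ∧ m ∈ (e' : Sym2 V)
      · obtain ⟨m, hm, hm'⟩ := hshare
        have hee' : (e, w1) ≠ (e', w2) := by simp [hee]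
        exact ⟨Walk.cons (myAdjInrInl hm) (Walk.cons (myAdjInlInr hm') Walk.nil),
          Walk.IsPath.mk' (by simp [hee']), by simp⟩
      · push_neg at hshare
        obtain ⟨x, y, hxy, hexy⟩ := myEdgeRep e
        obtain ⟨x', y', hxy', hexy'⟩ := myEdgeRep e'
        have hx'e : x' ∈ (e' : Sym2 V) := by rw [hexy']; exact Sym2.mem_mk_left x' y'
        have hy'e : y' ∈ (e' : Sym2 V) := by rw [hexy']; exact Sym2.mem_mk_right x' y'
        obtain ⟨z, a, hza, hsza, r, hr, hzr⟩ := myTreeE hT hxy x'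
        have ha : a ∈ (e : Sym2 V) := by rw [hexy, ← hsza]; exact Sym2.mem_mk_right z a
        have hz : z ∈ (e : Sym2 V) := by rw [hexy, ← hsza]; exact Sym2.mem_mk_left z a
        have hzx' : z ≠ x' := fun h => hshare z hz (h ▸ hx'e)
        have hzy' : z ≠ y' := fun h => hshare z hz (h ▸ hy'e)
        have hee' : (e, w1) ≠ (e', w2) := by simp [hee]
        by_cases hy' : y' ∈ r.support
        · set s := r.takeUntil y' hy' with hsdef
          have hsp : s.IsPath := hr.takeUntil hy'
          have hzs : z ∉ s.support := fun h => hzr (r.support_takeUntil_subset hy' h)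
          have hx's : x' ∉ s.support := by
            intro hmem
            have hnd := hr.support_nodup
            rw [← r.take_spec hy', Walk.support_append] at hnd
            have hdisj := List.disjoint_of_nodup_append hnd
            have h1 : x' ∈ (r.dropUntil y' hy').support := Walk.end_mem_support _
            rw [Walk.support_eq_cons] at h1
            rcases List.mem_cons.1 h1 with h2 | h2
            · exact hxy'.ne h2
            · exact hdisj hmem h2
          have hP : (Walk.cons hza (s.append (Walk.cons hxy'.symm Walk.nil))).IsPath := by
            apply Walk.IsPath.mk'
            rw [Walk.support_cons, Walk.support_append, Walk.support_cons, Walk.support_nil]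
            simp only [List.tail_cons]
            simp [List.nodup_append, hsp.support_nodup, hzs, hzx', hx's,
              List.disjoint_singleton]
            exact fun b hb hbx => hx's (hbx ▸ hb)
          have hrain := myTreeRainbow hT hc₀ _ hP
          rw [Walk.support_cons, List.tail_cons, Walk.support_append, Walk.support_cons,
            Walk.support_nil, List.tail_cons] at hrain
          rw [List.dropLast_concat] at hrain
          refine ⟨Walk.cons (myAdjInrInl ha)
            ((s.map (myInlHom T H)).append (Walk.cons (myAdjInlInr hy'e) Walk.nil)), ?_, ?_⟩
          · apply Walk.IsPath.mk'
            rw [Walk.support_cons, Walk.support_append, Walk.support_cons, Walk.support_nil,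
              Walk.support_map]
            simp only [List.tail_cons]
            simp [List.nodup_append, hsp.support_nodup.map myInlHomInj, hee',
              List.disjoint_singleton]
          · rw [Walk.support_cons, List.tail_cons, Walk.support_append, Walk.support_cons,
              Walk.support_nil, List.tail_cons, Walk.support_map]
            rw [List.dropLast_concat, List.map_map]
            exact hrain
        · have hP : (Walk.cons hza (r.append (Walk.cons hxy' Walk.nil))).IsPath := by
            apply Walk.IsPath.mk'
            rw [Walk.support_cons, Walk.support_append, Walk.support_cons, Walk.support_nil]
            simp only [List.tail_cons]
            simp [List.nodup_append, hr.support_nodup, hzr, hzy', hy',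
              List.disjoint_singleton]
            exact fun b hb hby => hy' (hby ▸ hb)
          have hrain := myTreeRainbow hT hc₀ _ hP
          rw [Walk.support_cons, List.tail_cons, Walk.support_append, Walk.support_cons,
            Walk.support_nil, List.tail_cons] at hrain
          rw [List.dropLast_concat] at hrain
          refine ⟨Walk.cons (myAdjInrInl ha)
            ((r.map (myInlHom T H)).append (Walk.cons (myAdjInlInr hx'e) Walk.nil)), ?_, ?_⟩
          · apply Walk.IsPath.mk'
            rw [Walk.support_cons, Walk.support_append, Walk.support_cons, Walk.support_nil,
              Walk.support_map]
            simp only [List.tail_cons]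
            simp [List.nodup_append, hr.support_nodup.map myInlHomInj, hee',
              List.disjoint_singleton]
          · rw [Walk.support_cons, List.tail_cons, Walk.support_append, Walk.support_cons,
              Walk.support_nil, List.tail_cons, Walk.support_map]
            rw [List.dropLast_concat, List.map_map]
            exact hrain
  rintro (u | ⟨e, w1⟩) (v | ⟨e', w2⟩)
  · exact Hll u v
  · obtain ⟨p, hp⟩ := Hrl e' w2 u
    exact ⟨p.reverse, myRainbowReverse hp⟩
  · exact Hrl e w1 v
  · exact Hrr e e' w1 w2

end MyMain
section MyFinal

open SimpleGraph List

lemma myExistsColoring' {V : Type*} (G : SimpleGraph V) [Finite V] (hG : G.Connected) :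
    ∃ n, ∃ c : V → Fin n, IsRVColoring G c := by
  classical
  have := Fintype.ofFinite V
  exact ⟨Fintype.card V, myExistsColoring G hG⟩

theorem stmt8 {V W : Type*} [Fintype V] [Fintype W] (T : SimpleGraph V) (H : SimpleGraph W)
    (hT : T.IsTree) (hH : H.Connected)
    (hm : 2 ≤ Fintype.card V) (hn : 2 ≤ Fintype.card W) :
    rvc (edgeCorona T H) = rvc T := by
  classical
  have hVne : Nonempty V := Fintype.card_pos_iff.1 (by omega)
  obtain ⟨nT, cT, hcT⟩ := myExistsColoring' T hT.isConnected
  have hTne : {k | ∃ c : V → Fin k, IsRVColoring T c}.Nonempty := ⟨nT, cT, hcT⟩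
  have hCconn : (edgeCorona T H).Connected := myCoronaConnected hT.isConnected
  obtain ⟨nC, cC, hcC⟩ := myExistsColoring' (edgeCorona T H) hCconn
  have hCne : {k | ∃ c : V ⊕ (T.edgeSet × W) → Fin k,
      IsRVColoring (edgeCorona T H) c}.Nonempty := ⟨nC, cC, hcC⟩
  apply _root_.le_antisymm
  · -- rvc (corona) ≤ rvc T
    obtain ⟨c₀, hc₀⟩ := Nat.sInf_mem hTne
    obtain ⟨c, hc⟩ := myCoronaColoring (H := H) hT c₀ hc₀ hVne
    exact Nat.sInf_le ⟨c, hc⟩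
  · -- rvc T ≤ rvc (corona)
    obtain ⟨c, hc⟩ := Nat.sInf_mem hCne
    refine Nat.sInf_le ⟨fun v => c (Sum.inl v), ?_⟩
    intro u v
    obtain ⟨p0⟩ := hT.isConnected.preconnected u v
    have hQ : p0.bypass.IsPath := p0.bypass_isPath
    set Q := p0.bypass with hQdef
    refine ⟨Q, hQ, ?_⟩
    obtain ⟨p, hpP, hpN⟩ := hc (Sum.inl u) (Sum.inl v)
    have key : ∀ x ∈ Q.support.tail.dropLast,
        (Sum.inl x : V ⊕ (T.edgeSet × W)) ∈ p.support.tail.dropLast := by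
      intro x hx
      have hxQ : x ∈ Q.support :=
        (List.tail_sublist _).subset ((List.dropLast_sublist _).subset hx)
      have hxu : x ≠ u := fun h => (myStartNotMemInternal Q hQ.support_nodup) (h ▸ hx)
      have hxv : x ≠ v := fun h => (myEndNotMemInternal Q hQ.support_nodup) (h ▸ hx)
      have hmem : (Sum.inl x : V ⊕ (T.edgeSet × W)) ∈ p.support := by
        by_contra hni
        obtain ⟨q, hq⟩ : ∃ q : T.Walk u v, x ∉ q.support := myProject p rfl hni
        have hEq : q.bypass = Q := myTreePathUnique hT q.bypass_isPath hQ
        exact hq (q.support_bypass_subset (hEq ▸ hxQ))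
      exact myMemInternal p hmem (by simp [hxu]) (by simp [hxv])
    have hQnd : Q.support.tail.dropLast.Nodup :=
      ((List.dropLast_sublist _).trans (List.tail_sublist _)).nodup hQ.support_nodup
    refine List.Nodup.map_on ?_ hQnd
    intro x hx y hy hxy
    exact Sum.inl_injective
      (List.inj_on_of_nodup_map hpN (key x hx) (key y hy) hxy)

end MyFinal
end

section
/- For m even, m ≥ 4, and any graph H_n of order n ≥ 2, the diameter of C_m ⋄ H_n equals m/2 + 1. -/
open SimpleGraph

lemma aux_sub_val {m : ℕ} [NeZero m] (a b : Fin m) :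
    (a - b).val = if b.val ≤ a.val then a.val - b.val else a.val + m - b.val := by
  have hm : 0 < m := a.pos
  have h := congrArg Fin.val (sub_add_cancel a b)
  rw [Fin.val_add] at h
  have h1 : (a - b).val < m := (a - b).is_lt
  have h2 : b.val < m := b.is_lt
  have h3 : a.val < m := a.is_lt
  rcases Nat.lt_or_ge ((a - b).val + b.val) m with hc | hc
  · rw [Nat.mod_eq_of_lt hc] at h; split_ifs <;> omega
  · rw [Nat.mod_eq_sub_mod hc, Nat.mod_eq_of_lt (by omega)] at h
    split_ifs <;> omega

/-- cycle metric candidate -/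
def cdist {m : ℕ} [NeZero m] (u v : Fin m) : ℕ := min ((v - u).val) ((u - v).val)

lemma aux_val_one {m : ℕ} [NeZero m] (hm : 4 ≤ m) : ((1 : Fin m)).val = 1 := by
  rw [Fin.val_one']; exact Nat.mod_eq_of_lt (by omega)

lemma cdist_lip {m : ℕ} [NeZero m] (t u v : Fin m)
    (h : (u - v).val = 1 ∨ (v - u).val = 1) :
    cdist u t ≤ cdist v t + 1 := by
  have h1 := t.is_lt; have h2 := u.is_lt; have h3 := v.is_lt
  simp only [cdist, aux_sub_val] at h ⊢
  split_ifs at h ⊢ <;> omega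

lemma cdist_le_half {m : ℕ} [NeZero m] (hme : m % 2 = 0) (u v : Fin m) :
    cdist u v ≤ m / 2 := by
  have h2 := u.is_lt; have h3 := v.is_lt
  simp only [cdist, aux_sub_val]
  split_ifs <;> omega

lemma cdist_pick {m : ℕ} [NeZero m] (hm : 4 ≤ m) (hme : m % 2 = 0) (a a' b' : Fin m)
    (h : (a' - b').val = 1 ∨ (b' - a').val = 1) :
    cdist a a' ≤ m / 2 - 1 ∨ cdist a b' ≤ m / 2 - 1 := by
  have h1 := a.is_lt; have h2 := a'.is_lt; have h3 := b'.is_lt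
  simp only [cdist, aux_sub_val] at h ⊢
  split_ifs at h ⊢ <;> omega

lemma cdist_self {m : ℕ} [NeZero m] (u : Fin m) : cdist u u = 0 := by
  simp [cdist]

lemma exists_walk_val {m : ℕ} [NeZero m] (hm : 4 ≤ m) :
    ∀ (d : ℕ) (u v : Fin m), (v - u).val = d →
      ∃ p : (cycleGraph m).Walk u v, p.length = d := by
  intro d
  induction d with
  | zero =>
    intro u v h
    have : v = u := by
      refine sub_eq_zero.mp (Fin.ext ?_)
      rw [h, Fin.val_zero]
    subst this; exact ⟨Walk.nil, rfl⟩
  | succ d ih =>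
    intro u v h
    have hadj : (cycleGraph m).Adj u (u + 1) := by
      rw [cycleGraph_adj']
      right
      rw [add_sub_cancel_left, aux_val_one hm]
    have hv : (v - (u + 1)).val = d := by
      rw [sub_add_eq_sub_sub, aux_sub_val, h, aux_val_one hm]
      simp
    obtain ⟨p, hp⟩ := ih (u + 1) v hv
    exact ⟨Walk.cons hadj p, by simp [hp]⟩

lemma exists_walk_cdist {m : ℕ} [NeZero m] (hm : 4 ≤ m) (u v : Fin m) :
    ∃ p : (cycleGraph m).Walk u v, p.length = cdist u v := by
  rcases Nat.le_total ((v - u).val) ((u - v).val) with h | h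
  · obtain ⟨p, hp⟩ := exists_walk_val hm _ u v rfl
    exact ⟨p, by rw [hp, cdist]; omega⟩
  · obtain ⟨p, hp⟩ := exists_walk_val hm _ v u rfl
    exact ⟨p.reverse, by rw [Walk.length_reverse, hp, cdist]; omega⟩

open Classical in
/-- potential function -/
noncomputable def fF {V W : Type*} (G : SimpleGraph V) (_H : SimpleGraph W) (gV : V → ℕ)
    (t1 t2 : V) : (V ⊕ (G.edgeSet × W)) → ℕ :=
  Sum.elim (fun u => gV u + 1)
    (fun p => if t1 ∈ (p.1 : Sym2 V) ∧ t2 ∈ (p.1 : Sym2 V) then 0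
      else Sym2.lift ⟨fun a b => min (gV a) (gV b), fun a b => min_comm _ _⟩ (p.1 : Sym2 V) + 2)

lemma fF_lip {V W : Type*} (G : SimpleGraph V) (H : SimpleGraph W) (gV : V → ℕ) (t1 t2 : V)
    (hg : ∀ u v, G.Adj u v → gV u ≤ gV v + 1)
    (ht : ∀ u, (u = t1 ∨ u = t2) → gV u = 0)
    (hne : t1 ≠ t2) :
    ∀ x z, (edgeCorona G H).Adj x z → fF G H gV t1 t2 x ≤ fF G H gV t1 t2 z + 1 := by
  have hgsymm : ∀ u v, G.Adj u v → gV u ≤ gV v + 1 ∧ gV v ≤ gV u + 1 :=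
    fun u v h => ⟨hg u v h, hg v u h.symm⟩
  have hmE : ∀ a b : V, Sym2.lift ⟨fun a b => min (gV a) (gV b), fun a b => min_comm _ _⟩ s(a, b)
      = min (gV a) (gV b) := fun a b => Sym2.lift_mk _ _ _
  rintro (u | ⟨⟨e, he⟩, w⟩) (v | ⟨⟨e', he'⟩, w'⟩) hadj
  · -- inl inl
    have h : G.Adj u v := hadj
    simp only [fF, Sum.elim_inl]
    have := hg u v h
    omega
  · -- inl inr
    have h : u ∈ e' := hadj
    induction e' using Sym2.ind with
    | _ a b =>
      have hab : G.Adj a b := he'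
      simp only [fF, Sum.elim_inl, Sum.elim_inr]
      rcases Sym2.mem_iff.mp h with rfl | rfl <;>
      · split_ifs with hc
        · obtain ⟨h1, h2⟩ := hc
          rcases Sym2.mem_iff.mp h1 with rfl | rfl <;>
            rcases Sym2.mem_iff.mp h2 with rfl | rfl <;>
              first
                | exact absurd rfl hne
                | (simp only [ht _ (Or.inl rfl), ht _ (Or.inr rfl)]; omega)
        · rw [hmE]
          have := hgsymm _ _ hab
          omega
  · -- inr inl
    have h : v ∈ e := hadj
    induction e using Sym2.ind with
    | _ a b =>
      simp only [fF, Sum.elim_inl, Sum.elim_inr]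
      split_ifs with hc
      · omega
      · rw [hmE]
        rcases Sym2.mem_iff.mp h with rfl | rfl <;> omega
  · -- inr inr
    have h : (⟨e, he⟩ : G.edgeSet) = ⟨e', he'⟩ := hadj.1
    obtain rfl : e = e' := congrArg Subtype.val h
    simp only [fF, Sum.elim_inr]
    split_ifs <;> omega

lemma fF_walk {V W : Type*} (G : SimpleGraph V) (H : SimpleGraph W) (gV : V → ℕ) (t1 t2 : V)
    (hlip : ∀ x z, (edgeCorona G H).Adj x z → fF G H gV t1 t2 x ≤ fF G H gV t1 t2 z + 1)
    (y : V ⊕ (G.edgeSet × W)) (hy : fF G H gV t1 t2 y = 0) :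
    ∀ (z : V ⊕ (G.edgeSet × W)) (p : (edgeCorona G H).Walk z y),
      fF G H gV t1 t2 z ≤ p.length := by
  intro z p
  induction p with
  | nil => exact hy.le
  | cons hadj q ih =>
    rw [Walk.length_cons]
    exact (hlip _ _ hadj).trans (by omega)


theorem stmt14 {W : Type*} [Fintype W] (H : SimpleGraph W) (m n : ℕ)
    (hm : 4 ≤ m) (hme : Even m) (hn : Fintype.card W = n) (hn2 : 2 ≤ n) :
    (edgeCorona (SimpleGraph.cycleGraph m) H).diam = m / 2 + 1 := by
  classical
  haveI : NeZero m := ⟨by omega⟩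
  have hme2 : m % 2 = 0 := Nat.even_iff.mp hme
  set G := SimpleGraph.cycleGraph m with hG
  set C := edgeCorona G H with hC
  have hW : Nonempty W := Fintype.card_pos_iff.mp (by omega)
  obtain ⟨w0⟩ := hW
  -- the embedding of the cycle in the corona
  let ι : G →g C := ⟨Sum.inl, fun {a b} h => h⟩
  -- upper bound on distances from inl vertices to inr vertices
  have ewalk : ∀ (u v : Fin m) (e' : G.edgeSet) (w' : W), v ∈ (e' : Sym2 (Fin m)) →
      C.edist (.inl u) (.inr (e', w')) ≤ (cdist u v + 1 : ℕ) := by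
    intro u v e' w' hv
    obtain ⟨p, hp⟩ := exists_walk_cdist hm u v
    have hadj : C.Adj (.inl v) (.inr (e', w')) := hv
    calc C.edist (Sum.inl u) (.inr (e', w'))
        ≤ (((p.map ι).append (Walk.cons hadj Walk.nil)).length : ℕ∞) := Walk.edist_le _
      _ = (cdist u v + 1 : ℕ) := by
          simp [Walk.length_append, Walk.length_map, hp]
  have hub : ∀ x y, C.edist x y ≤ ((m / 2 + 1 : ℕ) : ℕ∞) := by
    rintro (u | ⟨e, w⟩) (v | ⟨e', w'⟩)
    · obtain ⟨p, hp⟩ := exists_walk_cdist hm u v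
      calc C.edist (Sum.inl u) (Sum.inl v) ≤ ((p.map ι).length : ℕ∞) := Walk.edist_le _
        _ ≤ ((m / 2 + 1 : ℕ) : ℕ∞) := by
            rw [Walk.length_map, hp]
            exact_mod_cast le_trans (cdist_le_half hme2 u v) (by omega)
    · -- inl, inr
      obtain ⟨e', he'⟩ := e'
      induction e' using Sym2.ind with
      | _ a b =>
        refine le_trans (ewalk u a ⟨s(a, b), he'⟩ w' (Sym2.mem_mk_left a b)) ?_
        exact_mod_cast Nat.add_le_add_right (cdist_le_half hme2 u a) 1
    · -- inr, inl
      rw [edist_comm]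
      obtain ⟨e, he⟩ := e
      induction e using Sym2.ind with
      | _ a b =>
        refine le_trans (ewalk v a ⟨s(a, b), he⟩ w (Sym2.mem_mk_left a b)) ?_
        exact_mod_cast Nat.add_le_add_right (cdist_le_half hme2 v a) 1
    · -- inr, inr
      obtain ⟨e, he⟩ := e
      obtain ⟨e', he'⟩ := e'
      induction e using Sym2.ind with
      | _ a b =>
        induction e' using Sym2.ind with
        | _ a' b' =>
          have hadj' : G.Adj a' b' := he'
          have hpick := cdist_pick hm hme2 a a' b' (cycleGraph_adj'.mp hadj')
          have key : ∀ j : Fin m, j ∈ s(a', b') → cdist a j ≤ m / 2 - 1 →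
              C.edist (.inr (⟨s(a,b), he⟩, w)) (.inr (⟨s(a',b'), he'⟩, w')) ≤
                ((m / 2 + 1 : ℕ) : ℕ∞) := by
            intro j hj hd
            obtain ⟨p, hp⟩ := exists_walk_cdist hm a j
            have h1 : C.Adj (.inr (⟨s(a,b), he⟩, w)) (.inl a) := Sym2.mem_mk_left a b
            have h2 : C.Adj (.inl j) (.inr (⟨s(a',b'), he'⟩, w')) := hj
            calc C.edist (.inr (⟨s(a,b), he⟩, w)) (.inr (⟨s(a',b'), he'⟩, w'))
                ≤ ((Walk.cons h1 ((p.map ι).append (Walk.cons h2 Walk.nil))).length : ℕ∞) :=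
                  Walk.edist_le _
              _ ≤ ((m / 2 + 1 : ℕ) : ℕ∞) := by
                  simp only [Walk.length_cons, Walk.length_append, Walk.length_map, hp,
                    Walk.length_nil]
                  exact_mod_cast by omega
          rcases hpick with hd | hd
          · exact key a' (Sym2.mem_mk_left a' b') hd
          · exact key b' (Sym2.mem_mk_right a' b') hd
  -- lower bound
  set t1 : Fin m := ⟨m / 2, by omega⟩ with ht1def
  set t2 : Fin m := ⟨m / 2 + 1, by omega⟩ with ht2def
  have ht1 : t1.val = m / 2 := rfl
  have ht2 : t2.val = m / 2 + 1 := rfl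
  have h0v : (0 : Fin m).val = 0 := Fin.val_zero m
  have h1v : (1 : Fin m).val = 1 := aux_val_one hm
  have hadj12 : G.Adj t1 t2 := by
    rw [hG, cycleGraph_adj']
    right
    rw [aux_sub_val, ht1, ht2]
    simp
  have hadj01 : G.Adj (0 : Fin m) 1 := by
    rw [hG, cycleGraph_adj']
    right
    rw [aux_sub_val, h0v, h1v]
    simp
  have he1 : s(t1, t2) ∈ G.edgeSet := G.mem_edgeSet.mpr hadj12
  have he0 : s((0 : Fin m), 1) ∈ G.edgeSet := G.mem_edgeSet.mpr hadj01
  set gV : Fin m → ℕ := fun u => min (cdist u t1) (cdist u t2) with hgV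
  have hg : ∀ u v, G.Adj u v → gV u ≤ gV v + 1 := by
    intro u v huv
    have h := cycleGraph_adj'.mp huv
    have l1 := cdist_lip t1 u v h
    have l2 := cdist_lip t2 u v h
    simp only [hgV]
    omega
  have ht : ∀ u, (u = t1 ∨ u = t2) → gV u = 0 := by
    rintro u (rfl | rfl) <;> simp [hgV, cdist_self]
  have hne : t1 ≠ t2 := by
    intro h
    have := congrArg Fin.val h
    rw [ht1, ht2] at this
    omega
  have hlip := fF_lip G H gV t1 t2 hg ht hne
  have hy : fF G H gV t1 t2 (Sum.inr (⟨s(t1, t2), he1⟩, w0)) = 0 := by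
    simp only [fF, Sum.elim_inr]
    rw [if_pos ⟨Sym2.mem_mk_left t1 t2, Sym2.mem_mk_right t1 t2⟩]
  have hwalk := fF_walk G H gV t1 t2 hlip _ hy
  -- value of f at the far vertex
  have hgv0 : gV 0 = m / 2 - 1 := by
    have h1 := cdist_le_half (u := (0 : Fin m)) hme2 (v := t1)
    simp only [hgV, cdist, aux_sub_val, ht1, ht2, h0v]
    split_ifs <;> omega
  have hgv1 : gV 1 = m / 2 - 1 := by
    simp only [hgV, cdist, aux_sub_val, ht1, ht2, h1v]
    split_ifs <;> omega
  have hx : fF G H gV t1 t2 (Sum.inr (⟨s((0 : Fin m), 1), he0⟩, w0)) = m / 2 + 1 := by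
    simp only [fF, Sum.elim_inr]
    rw [if_neg, Sym2.lift_mk]
    · simp only [hgv0, hgv1]
      omega
    · rintro ⟨hmem, -⟩
      rcases Sym2.mem_iff.mp hmem with h | h <;>
      · have := congrArg Fin.val h
        simp only [ht1, h0v, h1v] at this
        omega
  have hlow : ((m / 2 + 1 : ℕ) : ℕ∞) ≤
      C.edist (Sum.inr (⟨s((0 : Fin m), 1), he0⟩, w0)) (Sum.inr (⟨s(t1, t2), he1⟩, w0)) := by
    rw [edist_eq_sInf]
    refine le_sInf ?_
    rintro b ⟨p, rfl⟩
    have := hwalk _ p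
    rw [hx] at this
    show ((m / 2 + 1 : ℕ) : ℕ∞) ≤ (p.length : ℕ∞)
    exact_mod_cast this
  have hediam : C.ediam = ((m / 2 + 1 : ℕ) : ℕ∞) :=
    le_antisymm (ediam_le_of_edist_le hub) (le_trans hlow edist_le_ediam)
  rw [SimpleGraph.diam, hediam, ENat.toNat_coe]
end
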